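/- Let X and U be finite nonempty sets, γ ∈ (0,1), and for each u ∈ U let P_u : X × X → ℝ satisfy P_u(x,x') ≥ 0 and Σ_{x'} P_u(x,x') = 1 for all x. Let Q : ℝ^d × X × U → ℝ be such that for each (x,u), θ ↦ Q(θ,x,u) is globally Lipschitz and twice continuously differentiable. Define ς^θ(x,u) = −γ Σ_{x'∈X} P_u(x,x') max_{u'∈U} Q(θ,x',u') + Q(θ,x,u). Let w : [0,T] → ℝ^d be Lipschitz continuous. Then for each (x,u) the function t ↦ ς^{w(t)}(x,u) is Lipschitz continuous on [0,T], and at any t₀ where both this function and w are differentiable, d/dt ς^{w(t)}(x,u)|_{t=t₀} = [ −γ Σ_{x'∈X} P_u(x,x') ∇_θ Q(w(t₀), x', φ(x')) + ∇_θ Q(w(t₀), x, u) ] · w'(t₀), for every map φ : X → U satisfying Q(w(t₀), x', φ(x')) = max_{u'∈U} Q(w(t₀), x', u') for all x' ∈ X. -/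

import Mathlib

open Filter Topology
open scoped RealInnerProductSpace BigOperators

section Aux

variable {E : Type*} [PseudoMetricSpace E]

lemma aux_lipschitz_ciSup {ι : Type*} [Fintype ι] [Nonempty ι]
    (f : ι → E → ℝ) (K : NNReal) (h : ∀ i, LipschitzWith K (f i)) :
    LipschitzWith K (fun θ => ⨆ i, f i θ) := by
  apply LipschitzWith.of_dist_le_mul
  intro a b
  rw [Real.dist_eq, abs_sub_le_iff]
  have key : ∀ a b : E, (⨆ i, f i a) - (⨆ i, f i b) ≤ K * dist a b := by
    intro a b
    rw [sub_le_iff_le_add]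
    apply ciSup_le
    intro i
    have h1 : f i a ≤ K * dist a b + f i b := by
      have := (h i).dist_le_mul a b
      rw [Real.dist_eq, abs_sub_le_iff] at this
      linarith [this.1]
    exact h1.trans (add_le_add_right
      (le_ciSup (Set.Finite.bddAbove (Set.finite_range fun i => f i b)) i) _)
  exact ⟨key a b, by simpa [dist_comm] using key b a⟩

lemma aux_lipschitz_const_mul {f : E → ℝ} {K : NNReal} (c : ℝ)
    (h : LipschitzWith K f) : LipschitzWith (‖c‖₊ * K) (fun θ => c * f θ) := by
  have hc : LipschitzWith ‖c‖₊ (fun r : ℝ => c * r) := by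
    simpa [smul_eq_mul] using lipschitzWith_smul (β := ℝ) c
  exact hc.comp h

lemma aux_lipschitz_sum {ι : Type*} (s : Finset ι)
    (f : ι → E → ℝ) (h : ∀ i ∈ s, ∃ K : NNReal, LipschitzWith K (f i)) :
    ∃ K : NNReal, LipschitzWith K (fun θ => ∑ i ∈ s, f i θ) := by
  classical
  induction s using Finset.cons_induction with
  | empty => exact ⟨0, by simpa using LipschitzWith.const (0 : ℝ)⟩
  | cons i s hi ih =>
    obtain ⟨K₁, h₁⟩ := h i (Finset.mem_cons_self i s)
    obtain ⟨K₂, h₂⟩ := ih (fun j hj => h j (Finset.mem_cons_of_mem hj))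
    exact ⟨K₁ + K₂, by simpa only [Finset.sum_cons] using h₁.add h₂⟩

end Aux

/-- Finite state/input spaces `X, U`, discount `γ ∈ (0,1)`, transition
kernels `P u`, and `Q(θ,x,u)` globally Lipschitz and `C²` in `θ`.  With
`ς^θ(x,u) = −γ Σ_{x'} P u x x' · max_{u'} Q(θ,x',u') + Q(θ,x,u)` and `w : [0,T] → ℝ^d`
Lipschitz, the map `t ↦ ς^{w t}(x,u)` is Lipschitz on `[0,T]`, and at any point `t₀`
where it and `w` are differentiable its derivative equals
`[−γ Σ_{x'} P u x x' ∇_θ Q(w t₀, x', φ x') + ∇_θ Q(w t₀, x, u)] ⬝ w'(t₀)`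
for every `Q^{w t₀}`-greedy map `φ`. -/
theorem stmt_6 (d : ℕ) (X U : Type) [Fintype X] [Fintype U] [Nonempty X] [Nonempty U]
    (γ : ℝ) (hγ : γ ∈ Set.Ioo (0 : ℝ) 1)
    (P : U → X → X → ℝ)
    (hPnonneg : ∀ u x x', 0 ≤ P u x x')
    (hProw : ∀ u x, ∑ x', P u x x' = 1)
    (Q : EuclideanSpace ℝ (Fin d) → X → U → ℝ)
    (hQLip : ∀ x u, ∃ K : NNReal, LipschitzWith K (fun θ => Q θ x u))
    (hQsmooth : ∀ x u, ContDiff ℝ 2 (fun θ => Q θ x u))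
    (T : ℝ) (hT : 0 < T)
    (w : ℝ → EuclideanSpace ℝ (Fin d))
    (Kw : NNReal) (hw : LipschitzOnWith Kw w (Set.Icc 0 T)) :
    ∀ (x : X) (u : U),
      (∃ K : NNReal, LipschitzOnWith K
          (fun t => -γ * ∑ x', P u x x' * (⨆ u', Q (w t) x' u') + Q (w t) x u)
          (Set.Icc 0 T)) ∧
        (∀ t₀ : ℝ,
          DifferentiableAt ℝ
            (fun t => -γ * ∑ x', P u x x' * (⨆ u', Q (w t) x' u') + Q (w t) x u) t₀ →
          DifferentiableAt ℝ w t₀ →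
          ∀ φ : X → U, (∀ x', Q (w t₀) x' (φ x') = ⨆ u', Q (w t₀) x' u') →
            deriv (fun t => -γ * ∑ x', P u x x' * (⨆ u', Q (w t) x' u') + Q (w t) x u) t₀
              = ⟪(-γ) • (∑ x', P u x x' • gradient (fun θ => Q θ x' (φ x')) (w t₀))
                  + gradient (fun θ => Q θ x u) (w t₀), deriv w t₀⟫) := by
  classical
  intro x u
  -- the function of θ
  set F : EuclideanSpace ℝ (Fin d) → ℝ := fun θ => -γ * ∑ x', P u x x' * (⨆ u', Q θ x' u') + Q θ x u with hF
  constructor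
  · -- Lipschitz part
    have hFlip : ∃ K : NNReal, LipschitzWith K F := by
      have hsum : ∃ K : NNReal, LipschitzWith K
          (fun θ : EuclideanSpace ℝ (Fin d) => ∑ x', P u x x' * (⨆ u', Q θ x' u')) := by
        apply aux_lipschitz_sum
        intro x' _
        -- common Lipschitz constant for all u'
        have : ∃ K : NNReal, ∀ u', LipschitzWith K (fun θ => Q θ x' u') := by
          choose K hK using hQLip x'
          refine ⟨Finset.univ.sup K, fun u' => (hK u').weaken ?_⟩
          exact Finset.le_sup (Finset.mem_univ u')
        obtain ⟨K, hK⟩ := this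
        exact ⟨_, aux_lipschitz_const_mul (P u x x')
          (aux_lipschitz_ciSup (fun u' θ => Q θ x' u') K hK)⟩
      obtain ⟨K₁, h₁⟩ := hsum
      obtain ⟨K₂, h₂⟩ := hQLip x u
      exact ⟨_, (aux_lipschitz_const_mul (-γ) h₁).add h₂⟩
    obtain ⟨K, hK⟩ := hFlip
    exact ⟨K * Kw, hK.comp_lipschitzOnWith hw⟩
  · -- derivative part
    intro t₀ hf hw' φ hφ
    set v := deriv w t₀ with hv
    -- gradients
    have hGrad : ∀ (x' : X) (u' : U), HasGradientAt (fun θ => Q θ x' u')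
        (gradient (fun θ => Q θ x' u') (w t₀)) (w t₀) :=
      fun x' u' => (((hQsmooth x' u').differentiable (by norm_num)) (w t₀)).hasGradientAt
    -- the majorant g
    set G : EuclideanSpace ℝ (Fin d) → ℝ := fun θ => -γ * ∑ x', P u x x' * Q θ x' (φ x') + Q θ x u with hG
    have hGfd : HasFDerivAt G
        ((-γ) • (∑ x', P u x x' •
            (InnerProductSpace.toDual ℝ (EuclideanSpace ℝ (Fin d)) (gradient (fun θ => Q θ x' (φ x')) (w t₀)) :
              EuclideanSpace ℝ (Fin d) →L[ℝ] ℝ))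
          + (InnerProductSpace.toDual ℝ (EuclideanSpace ℝ (Fin d)) (gradient (fun θ => Q θ x u) (w t₀)) :
              EuclideanSpace ℝ (Fin d) →L[ℝ] ℝ)) (w t₀) := by
      apply HasFDerivAt.add
      · have hsum : HasFDerivAt (fun θ : EuclideanSpace ℝ (Fin d) => ∑ x', P u x x' * Q θ x' (φ x'))
            (∑ x', P u x x' •
              (InnerProductSpace.toDual ℝ (EuclideanSpace ℝ (Fin d)) (gradient (fun θ => Q θ x' (φ x')) (w t₀)) :
                EuclideanSpace ℝ (Fin d) →L[ℝ] ℝ)) (w t₀) := by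
          apply HasFDerivAt.fun_sum
          intro x' _
          exact ((hGrad x' (φ x')).hasFDerivAt).const_mul (P u x x')
        simpa [smul_smul] using hsum.const_mul (-γ)
      · exact (hGrad x u).hasFDerivAt
    have hg : HasDerivAt (fun t => G (w t))
        (((-γ) • (∑ x', P u x x' •
            (InnerProductSpace.toDual ℝ (EuclideanSpace ℝ (Fin d)) (gradient (fun θ => Q θ x' (φ x')) (w t₀)) :
              EuclideanSpace ℝ (Fin d) →L[ℝ] ℝ))
          + (InnerProductSpace.toDual ℝ (EuclideanSpace ℝ (Fin d)) (gradient (fun θ => Q θ x u) (w t₀)) :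
              EuclideanSpace ℝ (Fin d) →L[ℝ] ℝ)) v) t₀ :=
      hGfd.comp_hasDerivAt t₀ hw'.hasDerivAt
    -- f ≤ g with equality at t₀
    have hle : ∀ t, F (w t) ≤ G (w t) := by
      intro t
      have hsum_le : ∑ x', P u x x' * Q (w t) x' (φ x')
          ≤ ∑ x', P u x x' * (⨆ u', Q (w t) x' u') := by
        apply Finset.sum_le_sum
        intro x' _
        exact mul_le_mul_of_nonneg_left
          (le_ciSup (Set.Finite.bddAbove (Set.finite_range _)) (φ x')) (hPnonneg u x x')
      have : -γ * ∑ x', P u x x' * (⨆ u', Q (w t) x' u')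
          ≤ -γ * ∑ x', P u x x' * Q (w t) x' (φ x') := by
        apply mul_le_mul_of_nonpos_left hsum_le (by linarith [hγ.1])
      simpa [F, G] using add_le_add_left this (Q (w t) x u)
    have heq : F (w t₀) = G (w t₀) := by
      simp only [F, G]
      congr 2
      exact Finset.sum_congr rfl fun x' _ => by rw [hφ x']
    -- deriv f t₀ = deriv g t₀
    have hdiff_g : DifferentiableAt ℝ (fun t => G (w t)) t₀ := hg.differentiableAt
    have hmax : IsLocalMax (fun t => F (w t) - G (w t)) t₀ := by
      apply Filter.Eventually.of_forall
      intro t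
      simp only
      rw [heq]
      linarith [hle t]
    have hderiv0 : deriv (fun t => F (w t) - G (w t)) t₀ = 0 := hmax.deriv_eq_zero
    have hdiff_f : DifferentiableAt ℝ (fun t => F (w t)) t₀ := hf
    have hsub : deriv (fun t => F (w t) - G (w t)) t₀
        = deriv (fun t => F (w t)) t₀ - deriv (fun t => G (w t)) t₀ :=
      deriv_sub hdiff_f hdiff_g
    have hfg : deriv (fun t => F (w t)) t₀ = deriv (fun t => G (w t)) t₀ := by
      have := hsub.symm.trans hderiv0
      linarith
    rw [show (fun t => -γ * ∑ x', P u x x' * (⨆ u', Q (w t) x' u') + Q (w t) x u)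
        = fun t => F (w t) from rfl, hfg, hg.deriv]
    -- now compute the continuous linear functional applied to v
    simp only [ContinuousLinearMap.add_apply, ContinuousLinearMap.smul_apply,
      ContinuousLinearMap.sum_apply, InnerProductSpace.toDual_apply_apply]
    rw [inner_add_left, real_inner_smul_left, sum_inner]
    simp only [real_inner_smul_left, smul_eq_mul]
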